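/- Let X be a subshift in which the periodic points are dense, and let f : X → X be an injective cellular automaton. Then f is surjective. -/

import Mathlib

/-- The shift map on the full shift `A^ℤ`: `σ(x)_i = x_{i+1}`. -/
def shiftMap {A : Type*} (x : ℤ → A) : ℤ → A := fun i => x (i + 1)

/-- A cellular automaton on the full shift `A^ℤ` (with the product topology,
`A` discrete): a continuous map commuting with the shift. -/
def IsCA {A : Type*} [TopologicalSpace A] (f : (ℤ → A) → (ℤ → A)) : Prop :=
  Continuous f ∧ ∀ x, f (shiftMap x) = shiftMap (f x)

/-- `f` is von Neumann regular in the monoid `End(A^ℤ)` of cellular automata: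
there is a CA `h` with `f ∘ h ∘ f = f` and `h ∘ f ∘ h = h`. -/
def IsRegularCA {A : Type*} [TopologicalSpace A] (f : (ℤ → A) → (ℤ → A)) : Prop :=
  ∃ h : (ℤ → A) → (ℤ → A), IsCA h ∧ f ∘ h ∘ f = f ∧ h ∘ f ∘ h = h

/-- A subshift: a closed, shift-invariant subset of the full shift. -/
def IsSubshift {A : Type*} [TopologicalSpace A] (X : Set (ℤ → A)) : Prop :=
  IsClosed X ∧ shiftMap '' X = X

/-- The finite word `w` occurs as a subword of the bi-infinite sequence `x`. -/
def occursIn {A : Type*} (w : List A) (x : ℤ → A) : Prop :=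
  ∃ i : ℤ, ∀ k : Fin w.length, x (i + (k.val : ℤ)) = w.get k

/-- A subshift of finite type: the set of points avoiding a finite set `F` of
forbidden finite words. -/
def IsSFT {A : Type*} (X : Set (ℤ → A)) : Prop :=
  ∃ F : Set (List A), F.Finite ∧ X = {x | ∀ w ∈ F, ¬ occursIn w x}

/-- The language of a subshift: the finite words occurring in its points. -/
def lang {A : Type*} (X : Set (ℤ → A)) : Set (List A) :=
  {w | ∃ x ∈ X, occursIn w x}

/-- `X` is mixing: for all words `u, v` in the language of `X` there is `N` such
that for every `n ≥ N` some word `u w v` with `|w| = n` is in the language. -/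
def IsMixing {A : Type*} (X : Set (ℤ → A)) : Prop :=
  ∀ u ∈ lang X, ∀ v ∈ lang X, ∃ N : ℕ, ∀ n : ℕ, N ≤ n →
    ∃ w : List A, w.length = n ∧ (u ++ w ++ v) ∈ lang X

/-- A cellular automaton on the subshift `X`: a map `X → X` (presented as a map
of the ambient full shift restricted to `X`) that is continuous on `X` and
commutes with the shift on `X`. -/
def IsCAOn {A : Type*} [TopologicalSpace A] (X : Set (ℤ → A))
    (f : (ℤ → A) → (ℤ → A)) : Prop :=
  Set.MapsTo f X X ∧ ContinuousOn f X ∧ ∀ x ∈ X, f (shiftMap x) = shiftMap (f x)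

/-- `f` is von Neumann regular as an element of the monoid `End(X)` of cellular
automata on `X`: there is a CA `h` on `X` with `f∘h∘f = f` and `h∘f∘h = h` as
maps on `X`. -/
def IsRegularCAOn {A : Type*} [TopologicalSpace A] (X : Set (ℤ → A))
    (f : (ℤ → A) → (ℤ → A)) : Prop :=
  ∃ h : (ℤ → A) → (ℤ → A), IsCAOn X h ∧
    (∀ x ∈ X, f (h (f x)) = f x) ∧ (∀ x ∈ X, h (f (h x)) = h x)

lemma shiftMap_iterate_apply {A : Type*} (x : ℤ → A) (p : ℕ) (i : ℤ) :
    (shiftMap^[p] x) i = x (i + p) := by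
  induction p generalizing i with
  | zero => simp
  | succ n ih =>
    rw [Function.iterate_succ_apply']
    show (shiftMap^[n] x) (i + 1) = x (i + (n + 1 : ℕ))
    rw [ih]
    congr 1
    push_cast
    ring

lemma shift_mem {A : Type*} [TopologicalSpace A] {X : Set (ℤ → A)}
    (hX : IsSubshift X) {x : ℤ → A} (hx : x ∈ X) : shiftMap x ∈ X := by
  rw [← hX.2]; exact ⟨x, hx, rfl⟩

lemma shift_iter_mem {A : Type*} [TopologicalSpace A] {X : Set (ℤ → A)}
    (hX : IsSubshift X) {x : ℤ → A} (hx : x ∈ X) (p : ℕ) : shiftMap^[p] x ∈ X := by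
  induction p with
  | zero => simpa
  | succ n ih => rw [Function.iterate_succ_apply']; exact shift_mem hX ih

lemma ca_comm_iter {A : Type*} [TopologicalSpace A] {X : Set (ℤ → A)}
    (hX : IsSubshift X) {f : (ℤ → A) → (ℤ → A)} (hf : IsCAOn X f)
    {x : ℤ → A} (hx : x ∈ X) (p : ℕ) :
    f (shiftMap^[p] x) = shiftMap^[p] (f x) := by
  induction p with
  | zero => simp
  | succ n ih =>
    rw [Function.iterate_succ_apply', Function.iterate_succ_apply',
      hf.2.2 _ (shift_iter_mem hX hx n), ih]

/-- A point of period `p ≥ 1` is determined by its values on `[0, p)`. -/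
lemma periodic_eval_mod {A : Type*} {x : ℤ → A} {p : ℕ} (hp : 1 ≤ p)
    (hx : shiftMap^[p] x = x) (i : ℤ) : x i = x (i % (p : ℤ)) := by
  have hper : ∀ j : ℤ, x (j + p) = x j := by
    intro j
    conv_rhs => rw [← hx]
    rw [shiftMap_iterate_apply]
  have key : ∀ (n : ℤ) (j : ℤ), x (j + n * p) = x j := by
    intro n
    induction n using Int.induction_on with
    | zero => simp
    | succ k ih =>
      intro j
      have : j + (k + 1 : ℤ) * p = (j + k * p) + p := by ring
      rw [this, hper, ih]
    | pred k ih =>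
      intro j
      have h1 := hper (j + (-(k : ℤ) - 1) * p)
      have : j + (-(k : ℤ) - 1) * p + p = j + (-(k : ℤ)) * p := by ring
      rw [this] at h1
      rw [← h1, ih]
  have : i % (p : ℤ) = i + (-(i / (p : ℤ))) * p := by
    rw [Int.emod_def]; ring
  rw [this, key]

lemma periodic_finite {A : Type*} [Finite A] (X : Set (ℤ → A)) (p : ℕ) (hp : 1 ≤ p) :
    Set.Finite {x | x ∈ X ∧ shiftMap^[p] x = x} := by
  have hpi : Set.InjOn (fun x : ℤ → A => fun k : Fin p => x (k : ℤ))
      {x | x ∈ X ∧ shiftMap^[p] x = x} := by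
    intro x hx y hy hxy
    funext i
    have hppos : (0 : ℤ) < (p : ℤ) := by exact_mod_cast hp
    have hmod0 : 0 ≤ i % (p : ℤ) := Int.emod_nonneg i (by omega)
    have hmodlt : i % (p : ℤ) < (p : ℤ) := Int.emod_lt_of_pos i hppos
    set k : Fin p := ⟨(i % (p : ℤ)).toNat, by omega⟩ with hk
    have hcast : ((k : ℕ) : ℤ) = i % (p : ℤ) := by
      simp [hk, Int.toNat_of_nonneg hmod0]
    have := congrFun hxy k
    simp only at this
    rw [hcast] at this
    rw [periodic_eval_mod hp hx.2 i, periodic_eval_mod hp hy.2 i, this]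
  have : Finite (Fin p → A) := inferInstance
  exact Set.Finite.of_finite_image (Set.toFinite _) hpi

/-- Let `X` be a subshift with dense periodic points and `f : X → X` an
injective cellular automaton. Then `f` is surjective, i.e. `f(X) = X`. -/
theorem stmt8 {A : Type*} [Finite A] [TopologicalSpace A] [DiscreteTopology A]
    (X : Set (ℤ → A)) (hX : IsSubshift X)
    (hdense : X ⊆ closure {x | x ∈ X ∧ ∃ p : ℕ, 1 ≤ p ∧ shiftMap^[p] x = x})
    (f : (ℤ → A) → (ℤ → A)) (hf : IsCAOn X f)
    (hinj : Set.InjOn f X) :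
    f '' X = X := by
  apply Set.Subset.antisymm (Set.image_subset_iff.mpr hf.1)
  -- f '' X is closed
  have hXcpt : IsCompact X := hX.1.isCompact
  have himgcpt : IsCompact (f '' X) := hXcpt.image_of_continuousOn hf.2.1
  have himgclosed : IsClosed (f '' X) := himgcpt.isClosed
  -- every periodic point of X is in f '' X
  have hper : {x | x ∈ X ∧ ∃ p : ℕ, 1 ≤ p ∧ shiftMap^[p] x = x} ⊆ f '' X := by
    rintro y ⟨hyX, p, hp, hyp⟩
    set P := {x | x ∈ X ∧ shiftMap^[p] x = x} with hP
    have hfin : P.Finite := periodic_finite X p hp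
    have hmaps : Set.MapsTo f P P := by
      rintro z ⟨hzX, hz⟩
      refine ⟨hf.1 hzX, ?_⟩
      rw [← ca_comm_iter hX hf hzX, hz]
    have hbij : Set.BijOn f P P :=
      (Set.Finite.injOn_iff_bijOn_of_mapsTo hfin hmaps).mp
        (hinj.mono fun z hz => hz.1)
    obtain ⟨z, hzP, hz⟩ := hbij.surjOn ⟨hyX, hyp⟩
    exact ⟨z, hzP.1, hz⟩
  intro x hx
  have := hdense hx
  have hsub : closure {x | x ∈ X ∧ ∃ p : ℕ, 1 ≤ p ∧ shiftMap^[p] x = x} ⊆ f '' X := by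
    rw [← himgclosed.closure_eq]
    exact closure_mono hper
  exact hsub this
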